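/- Let X = {(2^m, 2^k) : m, k ∈ ℤ, m ≥ 0, k ≥ 0} ⊆ ℕ². Fix D ∈ ℕ and set x₀ = Σ_{i=D+1}^{2D+1} 2^i. Then for all integers j, k with 1 ≤ j ≤ D and 1 ≤ k ≤ D, the point (x₀ + j, 1 + k) does not belong to FS(X). -/

import Mathlib

open scoped BigOperators

/-- binary digit sum (popcount) -/
def pc (n : ℕ) : ℕ := (Nat.digits 2 n).sum

lemma pc_rec (n : ℕ) : pc n = n % 2 + pc (n / 2) := by
  rcases Nat.eq_zero_or_pos n with h | h
  · simp [h, pc]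
  · unfold pc
    rw [Nat.digits_def' (by norm_num) h]
    simp

lemma pc_add_le : ∀ c ≤ 1, ∀ a b : ℕ, pc (a + b + c) ≤ pc a + pc b + c := by
  have key : ∀ N, ∀ a b, a + b ≤ N → ∀ c ≤ 1, pc (a + b + c) ≤ pc a + pc b + c := by
    intro N
    induction N with
    | zero =>
      intro a b hab c hc
      interval_cases c
      · simp [show a = 0 by omega, show b = 0 by omega]
      · simp [show a = 0 by omega, show b = 0 by omega, pc]
    | succ N ih =>
      intro a b hab c hc
      rcases Nat.eq_zero_or_pos (a + b) with h0 | h0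
      · interval_cases c
        · simp [show a = 0 by omega, show b = 0 by omega]
        · simp [show a = 0 by omega, show b = 0 by omega, pc]
      · set c' := (a % 2 + b % 2 + c) / 2 with hc'
        have hc'1 : c' ≤ 1 := by omega
        have ha2 : a = 2 * (a / 2) + a % 2 := (Nat.div_add_mod a 2).symm ▸ by omega
        have hb2 : b = 2 * (b / 2) + b % 2 := (Nat.div_add_mod b 2).symm ▸ by omega
        have hdiv : (a + b + c) / 2 = a / 2 + b / 2 + c' := by omega
        have hmod : (a + b + c) % 2 = (a % 2 + b % 2 + c) % 2 := by omega
        have hN : a / 2 + b / 2 ≤ N := by omega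
        have := ih (a / 2) (b / 2) hN c' hc'1
        rw [pc_rec (a + b + c), hdiv, hmod]
        rw [pc_rec a, pc_rec b]
        omega
  intro c hc a b
  exact key (a + b) a b le_rfl c hc

lemma pc_add (a b : ℕ) : pc (a + b) ≤ pc a + pc b := by
  have := pc_add_le 0 (by norm_num) a b
  simpa using this

lemma pc_pow (m : ℕ) : pc (2 ^ m) = 1 := by
  induction m with
  | zero => simp [pc]
  | succ m ih =>
    rw [pc_rec]
    have h1 : 2 ^ (m + 1) % 2 = 0 := by
      simp [Nat.pow_succ, Nat.mul_mod]
    have h2 : 2 ^ (m + 1) / 2 = 2 ^ m := by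
      rw [Nat.pow_succ, Nat.mul_div_cancel]; norm_num
    rw [h1, h2, ih]

lemma pc_pos (n : ℕ) (hn : n ≠ 0) : 1 ≤ pc n := by
  induction n using Nat.strong_induction_on with
  | _ n ih =>
    rw [pc_rec]
    rcases Nat.eq_zero_or_pos (n % 2) with h | h
    · have h2 : n / 2 ≠ 0 := by omega
      have := ih (n / 2) (by omega) h2
      omega
    · omega

lemma pc_mul_pow_add (e a b : ℕ) (hb : b < 2 ^ e) :
    pc (2 ^ e * a + b) = pc a + pc b := by
  induction e generalizing b with
  | zero =>
    have : b = 0 := by simpa using hb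
    simp [this, pc]
  | succ e ih =>
    rw [pc_rec (2 ^ (e + 1) * a + b)]
    have he : 2 ^ (e + 1) * a = 2 * (2 ^ e * a) := by ring
    have hmod : (2 ^ (e + 1) * a + b) % 2 = b % 2 := by
      rw [he]; omega
    have hdiv : (2 ^ (e + 1) * a + b) / 2 = 2 ^ e * a + b / 2 := by
      rw [he]; omega
    have hb2 : b / 2 < 2 ^ e := by
      have : (2:ℕ) ^ (e+1) = 2 * 2 ^ e := by ring
      omega
    rw [hmod, hdiv, ih (b / 2) hb2, pc_rec b]
    omega

lemma pc_pow_sub_one (e : ℕ) : pc (2 ^ e - 1) = e := by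
  induction e with
  | zero => simp [pc]
  | succ e ih =>
    have h : 2 ^ (e + 1) - 1 = 2 * (2 ^ e - 1) + 1 := by
      have := Nat.one_le_two_pow (n := e)
      rw [pow_succ]; omega
    rw [h, pc_rec]
    have h1 : (2 * (2 ^ e - 1) + 1) % 2 = 1 := by omega
    have h2 : (2 * (2 ^ e - 1) + 1) / 2 = 2 ^ e - 1 := by omega
    rw [h1, h2, ih]; omega

lemma sum_range_two_pow (n : ℕ) : ∑ i ∈ Finset.range n, 2 ^ i = 2 ^ n - 1 := by
  induction n with
  | zero => simp
  | succ n ih =>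
    rw [Finset.sum_range_succ, ih, pow_succ]
    have := Nat.one_le_two_pow (n := n)
    omega

lemma pc_sum_le (F : Finset (ℕ × ℕ)) (hF : ∀ x ∈ F, ∃ m : ℕ, x.1 = 2 ^ m) :
    pc (∑ x ∈ F, x.1) ≤ F.card := by
  induction F using Finset.induction_on with
  | empty => simp [pc]
  | @insert a s hx ih =>
    rw [Finset.sum_insert hx, Finset.card_insert_of_notMem hx]
    obtain ⟨m, hm⟩ := hF a (Finset.mem_insert_self a s)
    calc pc (a.1 + ∑ x ∈ s, x.1) ≤ pc a.1 + pc (∑ x ∈ s, x.1) := pc_add _ _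
      _ ≤ 1 + s.card := by
          rw [hm, pc_pow]
          exact Nat.add_le_add_left (ih fun x hx' => hF x (Finset.mem_insert_of_mem hx')) 1
      _ = s.card + 1 := by omega

/-- `FS X` is the set of all sums of finitely many distinct elements of `X`
(sums over finite nonempty subsets of `X`). -/
def FS {α : Type*} [AddCommMonoid α] (X : Set α) : Set α :=
  {s | ∃ F : Finset α, F.Nonempty ∧ ↑F ⊆ X ∧ s = ∑ x ∈ F, x}

/-- `X = {(2^m, 2^k) : m, k ≥ 0}`. -/
def X2 : Set (ℕ × ℕ) := {p | ∃ m k : ℕ, p = (2 ^ m, 2 ^ k)}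

/-- With `x₀ = Σ_{i=D+1}^{2D+1} 2^i`, no point `(x₀ + j, 1 + k)` with `1 ≤ j,k ≤ D`
belongs to `FS(X)`. -/
theorem stmt_7 (D : ℕ) (hD : 1 ≤ D) (x₀ : ℕ)
    (hx₀ : x₀ = ∑ i ∈ Finset.Icc (D + 1) (2 * D + 1), 2 ^ i)
    (j k : ℕ) (hj1 : 1 ≤ j) (hjD : j ≤ D) (hk1 : 1 ≤ k) (hkD : k ≤ D) :
    (x₀ + j, 1 + k) ∉ FS X2 := by
  -- closed form for x₀
  have hx₀' : x₀ = 2 ^ (D + 1) * (2 ^ (D + 1) - 1) := by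
    rw [hx₀, ← Finset.Ico_add_one_right_eq_Icc, Finset.sum_Ico_eq_sum_range]
    have h1 : 2 * D + 1 + 1 - (D + 1) = D + 1 := by omega
    rw [h1]
    have h2 : ∀ i, 2 ^ (D + 1 + i) = 2 ^ (D + 1) * 2 ^ i := fun i => pow_add 2 _ _
    simp_rw [h2, ← Finset.mul_sum, sum_range_two_pow]
  rintro ⟨F, hne, hsub, heq⟩
  have h1 : x₀ + j = ∑ x ∈ F, x.1 := by
    have := congrArg Prod.fst heq
    simpa [Prod.fst_sum] using this
  have h2 : 1 + k = ∑ x ∈ F, x.2 := by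
    have := congrArg Prod.snd heq
    simpa [Prod.snd_sum] using this
  -- card bound
  have hcard : F.card ≤ 1 + k := by
    have hle : ∀ x ∈ F, 1 ≤ x.2 := by
      intro x hx
      obtain ⟨m, km, hmk⟩ := hsub hx
      rw [hmk]
      exact Nat.one_le_two_pow
    calc F.card = F.card • 1 := by simp
      _ ≤ ∑ x ∈ F, x.2 := Finset.card_nsmul_le_sum F _ 1 hle
      _ = 1 + k := h2.symm
  -- popcount lower bound
  have hjlt : j < 2 ^ (D + 1) := by
    have h3 : D < 2 ^ D := Nat.lt_two_pow_self
    have h4 : 2 ^ D ≤ 2 ^ (D + 1) := Nat.pow_le_pow_right (by norm_num) (by omega)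
    omega
  have hpc : pc (x₀ + j) = (D + 1) + pc j := by
    rw [hx₀', pc_mul_pow_add _ _ _ hjlt, pc_pow_sub_one, Nat.add_comm]
  have hpcj : 1 ≤ pc j := pc_pos j (by omega)
  -- popcount upper bound
  have hup : pc (x₀ + j) ≤ F.card := by
    rw [h1]
    exact pc_sum_le F fun x hx => by
      obtain ⟨m, km, hmk⟩ := hsub hx
      exact ⟨m, by rw [hmk]⟩
  omega
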